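/- Let d, n ≥ 1 be integers, λ > 0 and L > 0 real numbers, and let φ_1, …, φ_n ∈ ℝ^d satisfy ‖φ_j‖₂ ≤ L for all j. Define X = λ I_d + Σ_{j=1}^n φ_j φ_jᵀ. Then Σ_{j=1}^n min{1, ‖φ_j‖²_{X⁻¹}} ≤ 2d · log((dλ + nL²)/(dλ)). -/

import Mathlib

open Matrix Finset

/-- Norm weighted by a (positive semidefinite) matrix `M`: `‖x‖_M = √(xᵀ M x)`. -/
noncomputable def mnorm {d : ℕ} (M : Matrix (Fin d) (Fin d) ℝ) (x : Fin d → ℝ) : ℝ :=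
  Real.sqrt (x ⬝ᵥ M.mulVec x)

/-- Euclidean norm of a vector in `ℝ^d`. -/
noncomputable def euclNorm {d : ℕ} (x : Fin d → ℝ) : ℝ := Real.sqrt (x ⬝ᵥ x)

lemma aux_trace_mul_vecMulVec {d : ℕ} (A : Matrix (Fin d) (Fin d) ℝ) (v : Fin d → ℝ) :
    (A * vecMulVec v v).trace = v ⬝ᵥ A.mulVec v := by
  simp only [Matrix.trace, Matrix.diag, mul_apply, vecMulVec_apply, dotProduct, mulVec,
    Finset.mul_sum]
  exact Finset.sum_congr rfl fun i _ => Finset.sum_congr rfl fun k _ => by ring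

lemma aux_posSemidef_vecMulVec {d : ℕ} (v : Fin d → ℝ) : (vecMulVec v v).PosSemidef := by
  refine .of_dotProduct_mulVec_nonneg ?_ ?_
  · ext i j; simp [vecMulVec_apply, mul_comm]
  · intro x
    have h : star x ⬝ᵥ (vecMulVec v v) *ᵥ x = (v ⬝ᵥ x) * (v ⬝ᵥ x) := by
      simp only [star_trivial, dotProduct, mulVec, vecMulVec_apply, Finset.mul_sum,
        Finset.sum_mul_sum, Finset.sum_mul]
      rw [Finset.sum_comm]
      exact Finset.sum_congr rfl fun i _ => Finset.sum_congr rfl fun k _ => by ring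
    rw [h]; exact mul_self_nonneg _

lemma aux_trace_eq_sum_eigenvalues {d : ℕ} (X : Matrix (Fin d) (Fin d) ℝ) (hX : X.PosDef) :
    X.trace = ∑ i, hX.1.eigenvalues i := by
  have hU : star (hX.1.eigenvectorUnitary : Matrix (Fin d) (Fin d) ℝ) *
      (hX.1.eigenvectorUnitary : Matrix (Fin d) (Fin d) ℝ) = 1 :=
    Unitary.coe_star_mul_self _
  conv_lhs => rw [hX.1.spectral_theorem]
  rw [Unitary.conjStarAlgAut_apply, Matrix.trace_mul_cycle, hU, one_mul, Matrix.trace_diagonal]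
  simp [RCLike.ofReal]

lemma aux_inv_spectral {d : ℕ} (X : Matrix (Fin d) (Fin d) ℝ) (hX : X.PosDef) :
    X⁻¹ = (hX.1.eigenvectorUnitary : Matrix (Fin d) (Fin d) ℝ) *
      diagonal (fun i => (hX.1.eigenvalues i)⁻¹) *
      star (hX.1.eigenvectorUnitary : Matrix (Fin d) (Fin d) ℝ) := by
  have hU : star (hX.1.eigenvectorUnitary : Matrix (Fin d) (Fin d) ℝ) *
      (hX.1.eigenvectorUnitary : Matrix (Fin d) (Fin d) ℝ) = 1 :=
    Unitary.coe_star_mul_self _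
  have hU' : (hX.1.eigenvectorUnitary : Matrix (Fin d) (Fin d) ℝ) *
      star (hX.1.eigenvectorUnitary : Matrix (Fin d) (Fin d) ℝ) = 1 :=
    Unitary.coe_mul_star_self _
  apply inv_eq_right_inv
  have hD : diagonal (RCLike.ofReal ∘ hX.1.eigenvalues) *
      diagonal (fun i => (hX.1.eigenvalues i)⁻¹) = (1 : Matrix (Fin d) (Fin d) ℝ) := by
    have hfun : (fun i => (RCLike.ofReal ∘ hX.1.eigenvalues) i * (hX.1.eigenvalues i)⁻¹)
        = fun _ : Fin d => (1 : ℝ) :=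
      funext fun i => mul_inv_cancel₀ (hX.eigenvalues_pos i).ne'
    rw [diagonal_mul_diagonal, hfun, diagonal_one]
  have key : ((hX.1.eigenvectorUnitary : Matrix (Fin d) (Fin d) ℝ) *
      diagonal (RCLike.ofReal ∘ hX.1.eigenvalues) *
      star (hX.1.eigenvectorUnitary : Matrix (Fin d) (Fin d) ℝ)) *
      ((hX.1.eigenvectorUnitary : Matrix (Fin d) (Fin d) ℝ) *
      diagonal (fun i => (hX.1.eigenvalues i)⁻¹) *
      star (hX.1.eigenvectorUnitary : Matrix (Fin d) (Fin d) ℝ)) = 1 := by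
    have h1 : ((hX.1.eigenvectorUnitary : Matrix (Fin d) (Fin d) ℝ) *
        diagonal (RCLike.ofReal ∘ hX.1.eigenvalues) *
        star (hX.1.eigenvectorUnitary : Matrix (Fin d) (Fin d) ℝ)) *
        ((hX.1.eigenvectorUnitary : Matrix (Fin d) (Fin d) ℝ) *
        diagonal (fun i => (hX.1.eigenvalues i)⁻¹) *
        star (hX.1.eigenvectorUnitary : Matrix (Fin d) (Fin d) ℝ))
        = (hX.1.eigenvectorUnitary : Matrix (Fin d) (Fin d) ℝ) *
        ((diagonal (RCLike.ofReal ∘ hX.1.eigenvalues) *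
        ((star (hX.1.eigenvectorUnitary : Matrix (Fin d) (Fin d) ℝ) *
          (hX.1.eigenvectorUnitary : Matrix (Fin d) (Fin d) ℝ)) *
        diagonal (fun i => (hX.1.eigenvalues i)⁻¹))) *
        star (hX.1.eigenvectorUnitary : Matrix (Fin d) (Fin d) ℝ)) := by
      simp only [mul_assoc]
    rw [h1, hU, one_mul, hD, one_mul, hU']
  rw [← Unitary.conjStarAlgAut_apply (S := ℝ) (x := diagonal (RCLike.ofReal ∘ hX.1.eigenvalues)),
    ← hX.1.spectral_theorem] at key
  exact key

lemma aux_trace_inv {d : ℕ} (X : Matrix (Fin d) (Fin d) ℝ) (hX : X.PosDef) :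
    X⁻¹.trace = ∑ i, (hX.1.eigenvalues i)⁻¹ := by
  have hU : star (hX.1.eigenvectorUnitary : Matrix (Fin d) (Fin d) ℝ) *
      (hX.1.eigenvectorUnitary : Matrix (Fin d) (Fin d) ℝ) = 1 :=
    Unitary.coe_star_mul_self _
  rw [aux_inv_spectral X hX, Matrix.trace_mul_cycle, hU, one_mul, Matrix.trace_diagonal]

/-- Final-matrix form of the elliptical potential lemma:
`Σ_j min{1, ‖φ_j‖²_{X⁻¹}} ≤ 2d log((dλ + nL²)/(dλ))` for
`X = λ I + Σ_j φ_j φ_jᵀ`. -/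
theorem elliptical_potential_final_matrix
    {d n : ℕ} (hd : 1 ≤ d) (hn : 1 ≤ n)
    (lam L : ℝ) (hlam : 0 < lam) (hL : 0 < L)
    (φ : Fin n → Fin d → ℝ) (hφ : ∀ j, euclNorm (φ j) ≤ L)
    (X : Matrix (Fin d) (Fin d) ℝ)
    (hX : X = lam • (1 : Matrix (Fin d) (Fin d) ℝ) + ∑ j, vecMulVec (φ j) (φ j)) :
    ∑ j, min 1 ((mnorm X⁻¹ (φ j)) ^ 2) ≤
      2 * d * Real.log ((d * lam + n * L ^ 2) / (d * lam)) := by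
  have hdR : (0:ℝ) < (d:ℝ) := by exact_mod_cast Nat.lt_of_lt_of_le Nat.zero_lt_one hd
  have hnR : (0:ℝ) < (n:ℝ) := by exact_mod_cast Nat.lt_of_lt_of_le Nat.zero_lt_one hn
  -- X is positive definite
  have hXpd : X.PosDef := by
    rw [hX]
    refine Matrix.PosDef.add_posSemidef ?_ ?_
    · rw [Matrix.smul_one_eq_diagonal]
      exact Matrix.posDef_diagonal_iff.mpr fun _ => hlam
    · exact Finset.sum_induction _ Matrix.PosSemidef
        (fun _ _ ha hb => ha.add hb) Matrix.PosSemidef.zero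
        (fun j _ => aux_posSemidef_vecMulVec (φ j))
  set μ : Fin d → ℝ := hXpd.1.eigenvalues with hμdef
  have hμ : ∀ i, 0 < μ i := hXpd.eigenvalues_pos
  set S : ℝ := ∑ i, μ i with hSdef
  have hS : 0 < S := Finset.sum_pos (fun i _ => hμ i) ⟨⟨0, hd⟩, Finset.mem_univ _⟩
  -- the quadratic forms of X⁻¹ are nonnegative
  have hq : ∀ j, 0 ≤ φ j ⬝ᵥ X⁻¹ *ᵥ φ j := fun j => by
    simpa using hXpd.inv.posSemidef.dotProduct_mulVec_nonneg (φ j)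
  -- Step 1: bound by the sum of quadratic forms
  have step1 : ∑ j, min 1 ((mnorm X⁻¹ (φ j)) ^ 2) ≤ ∑ j, φ j ⬝ᵥ X⁻¹ *ᵥ φ j := by
    refine Finset.sum_le_sum fun j _ => ?_
    have h2 : (mnorm X⁻¹ (φ j)) ^ 2 = φ j ⬝ᵥ X⁻¹ *ᵥ φ j := Real.sq_sqrt (hq j)
    rw [h2]
    exact min_le_right _ _
  -- Step 2: the sum of quadratic forms equals d - lam * tr X⁻¹
  have hdet : IsUnit X.det := hXpd.det_pos.ne'.isUnit
  have hsum_eq : (∑ j, vecMulVec (φ j) (φ j)) = X - lam • (1 : Matrix (Fin d) (Fin d) ℝ) := by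
    rw [hX]; abel
  have step2 : ∑ j, φ j ⬝ᵥ X⁻¹ *ᵥ φ j = (d:ℝ) - lam * ∑ i, (μ i)⁻¹ := by
    have e1 : ∑ j, φ j ⬝ᵥ X⁻¹ *ᵥ φ j = (X⁻¹ * ∑ j, vecMulVec (φ j) (φ j)).trace := by
      rw [Matrix.mul_sum, Matrix.trace_sum]
      exact Finset.sum_congr rfl fun j _ => (aux_trace_mul_vecMulVec X⁻¹ (φ j)).symm
    rw [e1, hsum_eq, Matrix.mul_sub, Matrix.trace_sub, Matrix.nonsing_inv_mul X hdet,
      Matrix.mul_smul, mul_one, Matrix.trace_smul, Matrix.trace_one, smul_eq_mul,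
      aux_trace_inv X hXpd]
    simp
    exact Or.inl rfl
  -- Step 3 & 4: d - lam * Σ 1/μ_i = Σ (1 - lam/μ_i) ≤ Σ log(μ_i/lam)
  have step3 : (d:ℝ) - lam * ∑ i, (μ i)⁻¹ = ∑ i, (1 - lam * (μ i)⁻¹) := by
    rw [Finset.sum_sub_distrib, Finset.sum_const, Finset.card_univ, Fintype.card_fin,
      Finset.mul_sum, nsmul_eq_mul, mul_one]
  have step4 : ∑ i, (1 - lam * (μ i)⁻¹) ≤ ∑ i, Real.log (μ i / lam) := by
    refine Finset.sum_le_sum fun i _ => ?_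
    have h1 := Real.log_le_sub_one_of_pos (div_pos hlam (hμ i))
    have h2 : Real.log (lam / μ i) = Real.log lam - Real.log (μ i) :=
      Real.log_div hlam.ne' (hμ i).ne'
    have h3 : Real.log (μ i / lam) = Real.log (μ i) - Real.log lam :=
      Real.log_div (hμ i).ne' hlam.ne'
    have h4 : lam * (μ i)⁻¹ = lam / μ i := (div_eq_mul_inv lam (μ i)).symm
    rw [h4]
    linarith
  -- Step 5: Σ log(μ_i/lam) ≤ d log(S/(d lam))
  have step5 : ∑ i, Real.log (μ i / lam) ≤ (d:ℝ) * Real.log (S / ((d:ℝ) * lam)) := by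
    have pointwise : ∀ i, Real.log (μ i / lam) ≤
        Real.log (S / ((d:ℝ) * lam)) + (μ i * (d:ℝ) / S - 1) := by
      intro i
      have hxpos : 0 < μ i * (d:ℝ) / S := div_pos (mul_pos (hμ i) hdR) hS
      have h1 := Real.log_le_sub_one_of_pos hxpos
      have heq : μ i * (d:ℝ) / S = (μ i / lam) / (S / ((d:ℝ) * lam)) := by
        field_simp
      have h2 : Real.log (μ i * (d:ℝ) / S) =
          Real.log (μ i / lam) - Real.log (S / ((d:ℝ) * lam)) := by
        rw [heq, Real.log_div (div_pos (hμ i) hlam).ne' (div_pos hS (mul_pos hdR hlam)).ne']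
      linarith
    calc ∑ i, Real.log (μ i / lam)
        ≤ ∑ i, (Real.log (S / ((d:ℝ) * lam)) + (μ i * (d:ℝ) / S - 1)) :=
          Finset.sum_le_sum fun i _ => pointwise i
      _ = (d:ℝ) * Real.log (S / ((d:ℝ) * lam)) := by
          rw [Finset.sum_add_distrib, Finset.sum_sub_distrib, ← Finset.sum_div,
            ← Finset.sum_mul, Finset.sum_const, Finset.card_univ, Fintype.card_fin,
            Finset.sum_const, Finset.card_univ, Fintype.card_fin, nsmul_eq_mul,
            nsmul_eq_mul, ← hSdef, mul_comm S ((d:ℝ)), mul_div_assoc, div_self hS.ne']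
          ring
  -- Step 6: S = tr X ≤ d lam + n L²
  have htrX : X.trace = (d:ℝ) * lam + ∑ j, (φ j ⬝ᵥ φ j) := by
    have h1 : ∀ v : Fin d → ℝ, (vecMulVec v v).trace = v ⬝ᵥ v := by
      intro v; simp [Matrix.trace, Matrix.diag, vecMulVec_apply, dotProduct]
    rw [hX, Matrix.trace_add, Matrix.trace_smul, Matrix.trace_one, Matrix.trace_sum,
      smul_eq_mul]
    simp only [h1, Fintype.card_fin]
    ring
  have hφsq : ∀ j, φ j ⬝ᵥ φ j ≤ L ^ 2 := by
    intro j
    have h0 : 0 ≤ φ j ⬝ᵥ φ j := Finset.sum_nonneg fun i _ => mul_self_nonneg _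
    have h1 : (euclNorm (φ j)) ^ 2 = φ j ⬝ᵥ φ j := Real.sq_sqrt h0
    calc φ j ⬝ᵥ φ j = (euclNorm (φ j)) ^ 2 := h1.symm
      _ ≤ L ^ 2 := by
          have := hφ j
          have hnn : 0 ≤ euclNorm (φ j) := Real.sqrt_nonneg _
          nlinarith
  have hSle : S ≤ (d:ℝ) * lam + (n:ℝ) * L ^ 2 := by
    rw [hSdef, ← aux_trace_eq_sum_eigenvalues X hXpd, htrX]
    have : ∑ j, (φ j ⬝ᵥ φ j) ≤ (n:ℝ) * L ^ 2 := by
      calc ∑ j, (φ j ⬝ᵥ φ j) ≤ ∑ _j : Fin n, L ^ 2 :=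
            Finset.sum_le_sum fun j _ => hφsq j
        _ = (n:ℝ) * L ^ 2 := by
            rw [Finset.sum_const, Finset.card_univ, Fintype.card_fin, nsmul_eq_mul]
    linarith
  -- Step 7: combine
  have hlog_le : Real.log (S / ((d:ℝ) * lam)) ≤
      Real.log (((d:ℝ) * lam + (n:ℝ) * L ^ 2) / ((d:ℝ) * lam)) := by
    have h1 : 0 < S / ((d:ℝ) * lam) := by positivity
    apply Real.log_le_log h1
    apply div_le_div_of_nonneg_right hSle ?_ |>.trans_eq rfl
    · positivity
  have hlognn : 0 ≤ Real.log (((d:ℝ) * lam + (n:ℝ) * L ^ 2) / ((d:ℝ) * lam)) := by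
    apply Real.log_nonneg
    rw [le_div_iff₀ (by positivity)]
    nlinarith
  calc ∑ j, min 1 ((mnorm X⁻¹ (φ j)) ^ 2)
      ≤ ∑ j, φ j ⬝ᵥ X⁻¹ *ᵥ φ j := step1
    _ = (d:ℝ) - lam * ∑ i, (μ i)⁻¹ := step2
    _ = ∑ i, (1 - lam * (μ i)⁻¹) := step3
    _ ≤ ∑ i, Real.log (μ i / lam) := step4
    _ ≤ (d:ℝ) * Real.log (S / ((d:ℝ) * lam)) := step5
    _ ≤ (d:ℝ) * Real.log (((d:ℝ) * lam + (n:ℝ) * L ^ 2) / ((d:ℝ) * lam)) := by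
        exact mul_le_mul_of_nonneg_left hlog_le hdR.le
    _ ≤ 2 * (d:ℝ) * Real.log (((d:ℝ) * lam + (n:ℝ) * L ^ 2) / ((d:ℝ) * lam)) := by
        nlinarith
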